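/- Let n,m be positive integers, Q > 0, w ≥ 1, and 0 ≤ Q* ≤ Q. Let 0 < h₁ < ⋯ < hₙ and 0 < g₁ < ⋯ < g_m, let p ∈ ℝⁿ and q ∈ ℝᵐ be probability vectors with positive entries, and set aᵢ = Q* + 1/hᵢ², bⱼ = Q* + 1/gⱼ². Assume Σᵢ pᵢ/aᵢ = w Σⱼ qⱼ/bⱼ. Suppose A is an n×m matrix with nonnegative entries such that (i) each column of A sums to 1, (ii) Σᵢ Aᵢⱼ aᵢ = bⱼ for every j, and (iii) for every k ∈ {1,…,n}, Σ_{i=1}^k pᵢ/aᵢ ≤ w Σⱼ (qⱼ/bⱼ)(Σ_{i=1}^k Aᵢⱼ). Then for every f = (f₁,…,fₙ) ∈ ℝⁿ satisfying fₙ ≥ ½log₂(2πe/hₙ²), f₁ ≤ ½log₂(2πe(Q + 1/h₁²)), and 2^{2fᵢ} − 2πe/hᵢ² ≥ 2^{2f_k} − 2πe/h_k² whenever i < k, one has Σᵢ pᵢ fᵢ − (w/2) Σⱼ qⱼ log₂(Σᵢ Aᵢⱼ 2^{2fᵢ}) ≤ ½ Σᵢ pᵢ log₂(2πe aᵢ)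 − (w/2) Σⱼ qⱼ log₂(2πe bⱼ); i.e., the point fᵢ* = ½log₂(2πe aᵢ) is optimal for this constrained maximization. -/

import Mathlib

open Finset Real
open Fin.NatCast

/-- Bernoulli-type inequality: `λ·ln(1+x) ≤ ln(1+λx)` for `λ ∈ [0,1]`. -/
private lemma auxA {l x : ℝ} (hl0 : 0 ≤ l) (hl1 : l ≤ 1) (hx : 0 < 1 + x) :
    l * Real.log (1 + x) ≤ Real.log (1 + l * x) := by
  have h1 : 0 < 1 + l * x := by
    rcases eq_or_lt_of_le hl0 with h0 | h0
    · simp [← h0]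
    · have := mul_pos h0 hx
      nlinarith
  have hgm : (1 + x) ^ l * (1 : ℝ) ^ (1 - l) ≤ l * (1 + x) + (1 - l) * 1 :=
    Real.geom_mean_le_arith_mean2_weighted hl0 (by linarith) hx.le zero_le_one (by ring)
  rw [Real.one_rpow, mul_one] at hgm
  have h2 : (1 + x) ^ l ≤ 1 + l * x := by nlinarith
  calc l * Real.log (1 + x) = Real.log ((1 + x) ^ l) := (Real.log_rpow hx l).symm
    _ ≤ Real.log (1 + l * x) := Real.log_le_log (Real.rpow_pos_of_pos hx l) h2

/-- `a ↦ a·ln((a+s)/a)` is monotone. -/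
private lemma auxB {al be s : ℝ} (hal : 0 < al) (hab : al ≤ be) (hs : 0 < al + s) :
    al * Real.log ((al + s) / al) ≤ be * Real.log ((be + s) / be) := by
  have hbe : 0 < be := lt_of_lt_of_le hal hab
  have e1 : (1 : ℝ) + s / al = (al + s) / al := by field_simp
  have e2 : (1 : ℝ) + al / be * (s / al) = (be + s) / be := by
    field_simp
  have hx : 0 < 1 + s / al := by rw [e1]; positivity
  have hA := auxA (l := al / be) (x := s / al) (by positivity)
    ((div_le_one hbe).mpr hab) hx
  rw [e1, e2] at hA
  calc al * Real.log ((al + s) / al)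
      = be * (al / be * Real.log ((al + s) / al)) := by field_simp
    _ ≤ be * Real.log ((be + s) / be) := mul_le_mul_of_nonneg_left hA hbe.le

private lemma auxC {al be s' s : ℝ} (hal : 0 < al) (hab : al ≤ be) (hs' : 0 < al + s')
    (hss : s' ≤ s) :
    al * Real.log ((al + s') / al) ≤ be * Real.log ((be + s) / be) := by
  have hbe : 0 < be := lt_of_lt_of_le hal hab
  have h1 := auxB hal hab hs'
  have hb1 : 0 < be + s' := by linarith
  have h2 : Real.log ((be + s') / be) ≤ Real.log ((be + s) / be) := by
    apply Real.log_le_log (by positivity)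
    exact (div_le_div_iff_of_pos_right hbe).mpr (by linarith)
  calc al * Real.log ((al + s') / al) ≤ be * Real.log ((be + s') / be) := h1
    _ ≤ be * Real.log ((be + s) / be) := mul_le_mul_of_nonneg_left h2 hbe.le

/-- Jensen's inequality for `exp` with finitely many weights. -/
private lemma auxJ {ι : Type*} (s : Finset ι) (μ x : ι → ℝ) (hμ0 : ∀ i ∈ s, 0 ≤ μ i)
    (hμ1 : ∑ i ∈ s, μ i = 1) :
    Real.exp (∑ i ∈ s, μ i * x i) ≤ ∑ i ∈ s, μ i * Real.exp (x i) := by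
  set T : ℝ := ∑ i ∈ s, μ i * x i with hT
  have key : ∀ i ∈ s, μ i * Real.exp T * (1 + (x i - T)) ≤ μ i * Real.exp (x i) := by
    intro i hi
    have h1 : 1 + (x i - T) ≤ Real.exp (x i - T) := by
      have := Real.add_one_le_exp (x i - T); linarith
    have h2 : Real.exp T * (1 + (x i - T)) ≤ Real.exp T * Real.exp (x i - T) :=
      mul_le_mul_of_nonneg_left h1 (Real.exp_pos T).le
    rw [← Real.exp_add] at h2
    have h3 : T + (x i - T) = x i := by ring
    rw [h3] at h2
    calc μ i * Real.exp T * (1 + (x i - T)) = μ i * (Real.exp T * (1 + (x i - T))) := by ring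
      _ ≤ μ i * Real.exp (x i) := mul_le_mul_of_nonneg_left h2 (hμ0 i hi)
  have expand : ∑ i ∈ s, μ i * Real.exp T * (1 + (x i - T)) = Real.exp T := by
    have e : ∀ i ∈ s, μ i * Real.exp T * (1 + (x i - T))
        = Real.exp T * μ i + Real.exp T * (μ i * x i) - Real.exp T * T * μ i := fun i _ => by ring
    rw [Finset.sum_congr rfl e, Finset.sum_sub_distrib, Finset.sum_add_distrib,
      ← Finset.mul_sum, ← Finset.mul_sum, ← Finset.mul_sum, hμ1, ← hT]
    ring
  rw [← expand]
  exact Finset.sum_le_sum key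

/-- Sum over `Finset.Iic k` in `Fin (n+1)` as a sum over `Finset.range (k+1)`. -/
private lemma sum_Iic_fin {M : Type*} [AddCommMonoid M] {n : ℕ} (v : Fin (n + 1) → M)
    (k : Fin (n + 1)) :
    ∑ i ∈ Finset.Iic k, v i = ∑ i ∈ Finset.range (k.1 + 1), v i := by
  rw [← Fin.sum_univ_eq_sum_range (fun j => v j) (k.1 + 1)]
  apply Finset.sum_nbij' (i := fun (x : Fin (n + 1)) => (⟨min x.1 k.1, by omega⟩ : Fin (k.1 + 1)))
    (j := fun (y : Fin (k.1 + 1)) => ((y.1 : Fin (n + 1))))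
  · intro x hx; exact Finset.mem_univ _
  · intro y _
    rw [Finset.mem_Iic, Fin.le_def, Fin.val_natCast]
    have hy := y.2
    have : y.1 % (n + 1) = y.1 := Nat.mod_eq_of_lt (by omega)
    omega
  · intro x hx
    rw [Finset.mem_Iic, Fin.le_def] at hx
    have : min x.1 k.1 = x.1 := by omega
    simp only [this]
    exact Fin.cast_val_eq_self x
  · intro y _
    have hy := y.2
    apply Fin.ext
    simp only [Fin.val_natCast]
    have : y.1 % (n + 1) = y.1 := Nat.mod_eq_of_lt (by omega)
    omega
  · intro x hx
    rw [Finset.mem_Iic, Fin.le_def] at hx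
    have hmin : min x.1 k.1 = x.1 := by omega
    simp only [hmin]
    rw [Fin.cast_val_eq_self x]

set_option maxHeartbeats 1600000 in
theorem stmt0 (n m : ℕ) (Q w Qstar : ℝ) (hQ : 0 < Q) (hw : 1 ≤ w)
    (hQs0 : 0 ≤ Qstar) (hQsQ : Qstar ≤ Q)
    (h : Fin (n + 1) → ℝ) (g : Fin (m + 1) → ℝ)
    (hh0 : ∀ i, 0 < h i) (hhmono : StrictMono h)
    (hg0 : ∀ j, 0 < g j) (hgmono : StrictMono g)
    (p : Fin (n + 1) → ℝ) (q : Fin (m + 1) → ℝ)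
    (hp : ∀ i, 0 < p i) (hpsum : ∑ i, p i = 1)
    (hq : ∀ j, 0 < q j) (hqsum : ∑ j, q j = 1)
    (a : Fin (n + 1) → ℝ) (b : Fin (m + 1) → ℝ)
    (ha : ∀ i, a i = Qstar + 1 / (h i) ^ 2)
    (hb : ∀ j, b j = Qstar + 1 / (g j) ^ 2)
    (hbal : ∑ i, p i / a i = w * ∑ j, q j / b j)
    (A : Matrix (Fin (n + 1)) (Fin (m + 1)) ℝ)
    (hA0 : ∀ i j, 0 ≤ A i j)
    (hAcol : ∀ j, ∑ i, A i j = 1)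
    (hAa : ∀ j, ∑ i, A i j * a i = b j)
    (hmaj : ∀ k : Fin (n + 1), ∑ i ∈ Finset.Iic k, p i / a i ≤
      w * ∑ j, (q j / b j) * ∑ i ∈ Finset.Iic k, A i j)
    (f : Fin (n + 1) → ℝ)
    (hfn : f (Fin.last n) ≥
      (1 / 2) * Real.logb 2 (2 * Real.pi * Real.exp 1 / (h (Fin.last n)) ^ 2))
    (hf1 : f 0 ≤ (1 / 2) * Real.logb 2 (2 * Real.pi * Real.exp 1 * (Q + 1 / (h 0) ^ 2)))
    (hEPI : ∀ i k : Fin (n + 1), i < k →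
      (2 : ℝ) ^ (2 * f i) - 2 * Real.pi * Real.exp 1 / (h i) ^ 2 ≥
      (2 : ℝ) ^ (2 * f k) - 2 * Real.pi * Real.exp 1 / (h k) ^ 2) :
    ∑ i, p i * f i - (w / 2) * ∑ j, q j * Real.logb 2 (∑ i, A i j * (2 : ℝ) ^ (2 * f i)) ≤
      (1 / 2) * ∑ i, p i * Real.logb 2 (2 * Real.pi * Real.exp 1 * a i) -
      (w / 2) * ∑ j, q j * Real.logb 2 (2 * Real.pi * Real.exp 1 * b j) := by
  classical
  set c : ℝ := 2 * Real.pi * Real.exp 1 with hc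
  have hcpos : 0 < c := by positivity
  have hapos : ∀ i, 0 < a i := fun i => by
    rw [ha i]; have := hh0 i; positivity
  have hbpos : ∀ j, 0 < b j := fun j => by
    rw [hb j]; have := hg0 j; positivity
  have hlog2 : (0 : ℝ) < Real.log 2 := Real.log_pos one_lt_two
  set F : Fin (n + 1) → ℝ := fun i => (2 : ℝ) ^ (2 * f i) with hF
  have hFpos : ∀ i, 0 < F i := fun i => Real.rpow_pos_of_pos two_pos _
  have hfF : ∀ i, 2 * f i = Real.logb 2 (F i) := fun i =>
    (Real.logb_rpow (b := 2) two_pos (by norm_num)).symm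
  set gg : Fin (n + 1) → ℝ := fun i => f i - (1 / 2) * Real.logb 2 (c * a i) with hggdef
  have hgg : ∀ i, gg i = Real.log (F i / (c * a i)) / (2 * Real.log 2) := by
    intro i
    have h1 : f i = Real.logb 2 (F i) / 2 := by have := hfF i; linarith
    have h2 : 0 < c * a i := by have := hapos i; positivity
    simp only [hggdef]
    rw [h1, Real.logb, Real.logb, Real.log_div (hFpos i).ne' h2.ne']
    field_simp
  have h2gg : ∀ i, (2 : ℝ) ^ (2 * gg i) = F i / (c * a i) := by
    intro i
    have h2 : 0 < c * a i := by have := hapos i; positivity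
    have hlgb : 2 * gg i = Real.logb 2 (F i / (c * a i)) := by
      rw [hgg i, Real.logb]
      field_simp
    rw [hlgb, Real.rpow_logb (b := 2) two_pos (by norm_num) (by positivity)]
  have hF_eq : ∀ i, F i = c * a i * (2 : ℝ) ^ (2 * gg i) := by
    intro i
    have h2 : 0 < c * a i := by have := hapos i; positivity
    rw [h2gg i]
    field_simp
    rw [mul_div_cancel_right₀ _ (hapos i).ne']
  -- the per-column key inequality
  have keyj : ∀ j, Real.logb 2 (c * b j) + (∑ i, A i j * a i / b j * (2 * gg i))
      ≤ Real.logb 2 (∑ i, A i j * F i) := by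
    intro j
    have hbj := hbpos j
    have hμ0 : ∀ i, 0 ≤ A i j * a i / b j := fun i => by
      have := hapos i; have := hA0 i j; positivity
    have hμ1 : ∑ i, A i j * a i / b j = 1 := by
      rw [← Finset.sum_div, hAa j, div_self hbj.ne']
    set T : ℝ := ∑ i, A i j * a i / b j * (2 * gg i) with hT
    have hjen := auxJ Finset.univ (fun i => A i j * a i / b j)
      (fun i => 2 * gg i * Real.log 2) (fun i _ => hμ0 i) hμ1
    have hTlog : ∑ i, A i j * a i / b j * (2 * gg i * Real.log 2) = T * Real.log 2 := by
      rw [hT, Finset.sum_mul]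
      exact Finset.sum_congr rfl fun i _ => by ring
    have hexp_eq : ∀ i : Fin (n + 1),
        Real.exp (2 * gg i * Real.log 2) = (2 : ℝ) ^ (2 * gg i) := fun i => by
      rw [Real.rpow_def_of_pos two_pos, mul_comm]
    have h2T : (2 : ℝ) ^ T = Real.exp (T * Real.log 2) := by
      rw [Real.rpow_def_of_pos two_pos, mul_comm]
    have hjen2 : (2 : ℝ) ^ T ≤ ∑ i, A i j * a i / b j * (2 : ℝ) ^ (2 * gg i) := by
      rw [h2T, ← hTlog]
      refine le_trans hjen ?_
      apply le_of_eq
      exact Finset.sum_congr rfl fun i _ => by rw [hexp_eq i]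
    have e1 : ∑ i, A i j * F i = c * b j * ∑ i, A i j * a i / b j * (2 : ℝ) ^ (2 * gg i) := by
      rw [Finset.mul_sum]
      refine Finset.sum_congr rfl fun i _ => ?_
      rw [hF_eq i]
      field_simp
    have hSpos : c * b j * (2 : ℝ) ^ T ≤ ∑ i, A i j * F i := by
      rw [e1]
      have h2Tpos : (0:ℝ) < (2:ℝ) ^ T := Real.rpow_pos_of_pos two_pos T
      exact mul_le_mul_of_nonneg_left hjen2 (by positivity)
    have hcbT : 0 < c * b j * (2 : ℝ) ^ T := by
      have : (0:ℝ) < (2:ℝ) ^ T := Real.rpow_pos_of_pos two_pos T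
      positivity
    have hst : Real.logb 2 (c * b j * (2 : ℝ) ^ T) = Real.logb 2 (c * b j) + T := by
      rw [Real.logb_mul (by positivity) (by positivity),
        Real.logb_rpow (b := 2) two_pos (by norm_num)]
    calc Real.logb 2 (c * b j) + T = Real.logb 2 (c * b j * (2 : ℝ) ^ T) := hst.symm
      _ ≤ Real.logb 2 (∑ i, A i j * F i) :=
          (Real.logb_le_logb one_lt_two hcbT (lt_of_lt_of_le hcbT hSpos)).mpr hSpos
  -- sum the key inequality against q, w/2
  have step1 : ∑ j, q j * Real.logb 2 (c * b j)
      + ∑ j, q j * (∑ i, A i j * a i / b j * (2 * gg i))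
      ≤ ∑ j, q j * Real.logb 2 (∑ i, A i j * F i) := by
    rw [← Finset.sum_add_distrib]
    refine Finset.sum_le_sum fun j _ => ?_
    rw [← mul_add]
    exact mul_le_mul_of_nonneg_left (keyj j) (hq j).le
  -- swap the double sum
  set ρ : Fin (n + 1) → ℝ := fun i => ∑ j, q j * A i j / b j with hρ
  have hswap : ∑ j, q j * (∑ i, A i j * a i / b j * (2 * gg i))
      = 2 * ∑ i, a i * gg i * ρ i := by
    calc ∑ j, q j * (∑ i, A i j * a i / b j * (2 * gg i))
        = ∑ j, ∑ i, q j * (A i j * a i / b j * (2 * gg i)) :=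
          Finset.sum_congr rfl fun j _ => Finset.mul_sum _ _ _
      _ = ∑ i, ∑ j, q j * (A i j * a i / b j * (2 * gg i)) := Finset.sum_comm
      _ = ∑ i, 2 * (a i * gg i) * ∑ j, q j * A i j / b j := by
          refine Finset.sum_congr rfl fun i _ => ?_
          rw [Finset.mul_sum]
          exact Finset.sum_congr rfl fun j _ => by ring
      _ = 2 * ∑ i, a i * gg i * ρ i := by
          rw [Finset.mul_sum]
          refine Finset.sum_congr rfl fun i _ => ?_
          simp only [hρ]
          ring
  -- Abel summation
  set τ : Fin (n + 1) → ℝ := fun i => a i * gg i with hτ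
  set d : Fin (n + 1) → ℝ := fun i => p i / a i - w * ρ i with hd
  -- partial sums of d are ≤ 0
  have hDk : ∀ k : Fin (n + 1), ∑ i ∈ Finset.Iic k, d i ≤ 0 := by
    intro k
    have hm := hmaj k
    have hrw : w * ∑ j, (q j / b j) * ∑ i ∈ Finset.Iic k, A i j
        = w * ∑ i ∈ Finset.Iic k, ρ i := by
      congr 1
      calc ∑ j, (q j / b j) * ∑ i ∈ Finset.Iic k, A i j
          = ∑ j, ∑ i ∈ Finset.Iic k, (q j / b j) * A i j :=
            Finset.sum_congr rfl fun j _ => Finset.mul_sum _ _ _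
        _ = ∑ i ∈ Finset.Iic k, ∑ j, (q j / b j) * A i j := Finset.sum_comm
        _ = ∑ i ∈ Finset.Iic k, ρ i := by
            refine Finset.sum_congr rfl fun i _ => ?_
            simp only [hρ]
            exact Finset.sum_congr rfl fun j _ => by ring
    rw [hrw] at hm
    have : ∑ i ∈ Finset.Iic k, d i
        = ∑ i ∈ Finset.Iic k, p i / a i - w * ∑ i ∈ Finset.Iic k, ρ i := by
      simp only [hd]
      rw [Finset.sum_sub_distrib, Finset.mul_sum]
    rw [this]
    linarith
  -- total sum of d is 0
  have hDtot : ∑ i, d i = 0 := by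
    have hρtot : ∑ i, ρ i = ∑ j, q j / b j := by
      calc ∑ i, ρ i = ∑ i, ∑ j, q j * A i j / b j := by
            refine Finset.sum_congr rfl fun i _ => ?_
            simp only [hρ]
        _ = ∑ j, ∑ i, q j * A i j / b j := Finset.sum_comm
        _ = ∑ j, q j / b j := by
            refine Finset.sum_congr rfl fun j _ => ?_
            rw [show ∑ i, q j * A i j / b j = (q j / b j) * ∑ i, A i j by
              rw [Finset.mul_sum]; exact Finset.sum_congr rfl fun i _ => by ring]
            rw [hAcol j, mul_one]
    simp only [hd]
    rw [Finset.sum_sub_distrib, ← Finset.mul_sum, hρtot, hbal]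
    ring
  -- τ is nonincreasing
  have hτmono : ∀ i k : Fin (n + 1), i < k → τ k ≤ τ i := by
    intro i k hik
    have hhik : h i < h k := hhmono hik
    have haik : a k ≤ a i := by
      rw [ha i, ha k]
      have h1 := hh0 i
      have h2 := hh0 k
      have : 1 / (h k) ^ 2 ≤ 1 / (h i) ^ 2 := by
        apply div_le_div_of_nonneg_left one_pos.le (by positivity)
        nlinarith
      linarith
    have hsik : F k - c * a k ≤ F i - c * a i := by
      have := hEPI i k hik
      have e1 : c * a i = c * Qstar + c / (h i) ^ 2 := by rw [ha i]; ring
      have e2 : c * a k = c * Qstar + c / (h k) ^ 2 := by rw [ha k]; ring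
      simp only [hF]
      rw [e1, e2]
      have hge : (2 : ℝ) ^ (2 * f i) - c / (h i) ^ 2 ≥ (2 : ℝ) ^ (2 * f k) - c / (h k) ^ 2 := this
      linarith
    -- rewrite τ via natural logs
    have hτrw : ∀ l : Fin (n + 1),
        τ l = (c * a l) * Real.log ((c * a l + (F l - c * a l)) / (c * a l)) / (c * (2 * Real.log 2)) := by
      intro l
      have hl : 0 < c * a l := by have := hapos l; positivity
      simp only [hτ]
      rw [hgg l]
      rw [show c * a l + (F l - c * a l) = F l by ring]
      field_simp
    rw [hτrw i, hτrw k]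
    have hden : (0:ℝ) < c * (2 * Real.log 2) := by positivity
    apply (div_le_div_iff_of_pos_right hden).mpr
    refine auxC ?_ ?_ ?_ hsik
    · have := hapos k; positivity
    · have := hapos i
      exact mul_le_mul_of_nonneg_left haik hcpos.le
    · rw [show c * a k + (F k - c * a k) = F k by ring]; exact hFpos k
  -- Abel: ∑ τ d ≤ 0
  have habelkey : ∑ i, τ i * d i ≤ 0 := by
    have hconv : ∑ i, τ i * d i
        = ∑ k ∈ Finset.range (n + 1), τ k * d k := by
      rw [← Fin.sum_univ_eq_sum_range (fun k => τ (k : Fin (n + 1)) * d (k : Fin (n + 1))) (n + 1)]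
      exact Finset.sum_congr rfl fun i _ => by rw [Fin.cast_val_eq_self]
    rw [hconv]
    have habel := Finset.sum_range_by_parts (fun k : ℕ => τ (k : Fin (n + 1)))
      (fun k : ℕ => d (k : Fin (n + 1))) (n + 1)
    simp only [smul_eq_mul, Nat.add_sub_cancel] at habel
    rw [habel]
    have hsum0 : ∑ i ∈ Finset.range (n + 1), d (i : Fin (n + 1)) = 0 := by
      rw [← Fin.sum_univ_eq_sum_range (fun k => d (k : Fin (n + 1))) (n + 1)]
      rw [show (∑ i : Fin (n+1), d ((i : ℕ) : Fin (n+1))) = ∑ i, d i from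
        Finset.sum_congr rfl fun i _ => by rw [Fin.cast_val_eq_self]]
      exact hDtot
    rw [hsum0, mul_zero, zero_sub]
    rw [neg_nonpos]
    apply Finset.sum_nonneg
    intro i hi
    rw [Finset.mem_range] at hi
    have hi1 : i < n + 1 := by omega
    have hi2 : i + 1 < n + 1 := by omega
    have hlt : ((i : Fin (n + 1)) : Fin (n + 1)) < ((i + 1 : ℕ) : Fin (n + 1)) := by
      rw [Fin.lt_def, Fin.val_natCast, Fin.val_natCast]
      rw [Nat.mod_eq_of_lt hi1, Nat.mod_eq_of_lt hi2]
      omega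
    have hmono := hτmono _ _ hlt
    have hD : ∑ j ∈ Finset.range (i + 1), d (j : Fin (n + 1)) ≤ 0 := by
      have hk := hDk ⟨i, hi1⟩
      rw [sum_Iic_fin d ⟨i, hi1⟩] at hk
      simpa using hk
    have h1 : τ ((i + 1 : ℕ) : Fin (n + 1)) - τ ((i : ℕ) : Fin (n + 1)) ≤ 0 := by
      push_cast at hmono ⊢
      linarith
    nlinarith [h1, hD]
  -- combine everything
  have hptau : ∑ i, p i * gg i - w * ∑ i, a i * gg i * ρ i = ∑ i, τ i * d i := by
    rw [Finset.mul_sum, ← Finset.sum_sub_distrib]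
    refine Finset.sum_congr rfl fun i _ => ?_
    have hai := (hapos i).ne'
    simp only [hτ, hd]
    field_simp
  have hmain : ∑ i, p i * gg i ≤ w * ∑ i, a i * gg i * ρ i := by
    have := habelkey
    linarith [hptau]
  -- unfold gg in the goal
  have hgoal1 : ∑ i, p i * f i - (1 / 2) * ∑ i, p i * Real.logb 2 (c * a i)
      = ∑ i, p i * gg i := by
    rw [Finset.mul_sum, ← Finset.sum_sub_distrib]
    exact Finset.sum_congr rfl fun i _ => by simp only [hggdef]; ring
  have hw2 : (0:ℝ) ≤ w / 2 := by linarith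
  have step2 : (w / 2) * (∑ j, q j * Real.logb 2 (c * b j)
      + ∑ j, q j * (∑ i, A i j * a i / b j * (2 * gg i)))
      ≤ (w / 2) * ∑ j, q j * Real.logb 2 (∑ i, A i j * F i) :=
    mul_le_mul_of_nonneg_left step1 hw2
  rw [hswap] at step2
  have hws : (w / 2) * (∑ j, q j * Real.logb 2 (c * b j) + 2 * ∑ i, a i * gg i * ρ i)
      = (w / 2) * ∑ j, q j * Real.logb 2 (c * b j) + w * ∑ i, a i * gg i * ρ i := by ring
  have hfinal : ∑ i, p i * gg i ≤ (w / 2) * ∑ j, q j * Real.logb 2 (∑ i, A i j * F i)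
      - (w / 2) * ∑ j, q j * Real.logb 2 (c * b j) := by
    rw [hws] at step2
    linarith [step2, hmain]
  linarith [hgoal1, hfinal]
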